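/- Let p be a prime and n a natural number with p ≤ n and a₀ := n % p ≥ 2. Then the binomial coefficient C(n−1, n−a₀) is congruent to 1 modulo p, and C(n−1, n−a₀) > 1. (In particular C(n−1, n−a₀) is not divisible by p.) -/
import Mathlib

/-- Let `p` be a prime and `n` a natural number with `p ≤ n` and `a₀ := n % p ≥ 2`.
Then `C(n-1, n-a₀) ≡ 1 (mod p)` and `C(n-1, n-a₀) > 1`. -/
theorem stmt0 (p n : ℕ) (hp : p.Prime) (hpn : p ≤ n) (ha : 2 ≤ n % p) :
    Nat.choose (n - 1) (n - n % p) ≡ 1 [MOD p] ∧ 1 < Nat.choose (n - 1) (n - n % p) := by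
  haveI : Fact p.Prime := ⟨hp⟩
  set a := n % p with haa
  set q := n / p with hq
  have hap : a < p := Nat.mod_lt _ hp.pos
  have hn : n = p * q + a := (Nat.div_add_mod n p).symm
  have hq1 : 1 ≤ q := Nat.one_le_div_iff hp.pos |>.mpr hpn
  have h1 : n - 1 = p * q + (a - 1) := by omega
  have h2 : n - a = p * q := by omega
  have hm1 : (n - 1) % p = a - 1 := by rw [h1]; rw [Nat.mul_add_mod]; exact Nat.mod_eq_of_lt (by omega)
  have hd1 : (n - 1) / p = q := by rw [h1, Nat.mul_add_div hp.pos, Nat.div_eq_of_lt (by omega)]; omega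
  have hm2 : (n - a) % p = 0 := by rw [h2]; simp [Nat.mul_mod_right]
  have hd2 : (n - a) / p = q := by rw [h2]; exact Nat.mul_div_cancel_left _ hp.pos
  constructor
  · have := Choose.choose_modEq_choose_mod_mul_choose_div_nat (n := n - 1) (k := n - a) (p := p)
    rwa [hm1, hd1, hm2, hd2, Nat.choose_zero_right, Nat.choose_self, one_mul] at this
  · have hk0 : 0 < n - a := by omega
    have hkm : n - a < n - 1 := by omega
    obtain ⟨k, hk⟩ : ∃ k, n - a = k + 1 := ⟨n - a - 1, by omega⟩
    obtain ⟨m, hm⟩ : ∃ m, n - 1 = m + 1 := ⟨n - 2, by omega⟩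
    rw [hk, hm, Nat.choose_succ_succ, Nat.succ_eq_add_one]
    have h1 : 0 < Nat.choose m k := Nat.choose_pos (by omega)
    have h2 : 0 < Nat.choose m (k + 1) := Nat.choose_pos (by omega)
    omega
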